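/- Assume P = Q, n = 2 and the loss function l(x) = (−x)^+. Let S_1, S_2 be integrable with S_1 ℱ_1-measurable, let T := E[S_2 | ℱ_1], and let α_1, α_2 ≥ 0. Then: (i) V_0^{EU} := inf{ E[M] : M ℱ_1-measurable integrable, E[(S_1 − M)^+] ≤ α_1, E[(T − M)^+] ≤ α_2 } = max( E[S_1] − α_1, E[S_2] − α_2, E[S_1 ∨ T] − α_1 − α_2 ); (ii) V_0^{TC} := inf{ E[M] : M ℱ_1-measurable integrable, E[(S_1 − M)^+] ≤ α_1, (T − M)^+ ≤ α_2 a.s. } = max( E[S_2] − α_2, E[ S_1 ∨ (T − α_2) ] − α_1 ); (iii) V_0^{LB} := inf{ E[M] : M ℱ_1-measurable integrable, E[ max( (S_1 − M)^+ − α_1, (T − M)^+ − α_2 ) ] ≤ 0 } = E[ max( S_1 − α_1, T − α_2 ) ]. -/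

import Mathlib

open MeasureTheory Filter
open scoped MeasureTheory


private lemma aux_exists_scale (α L : ℝ) (hα : 0 ≤ α) (hL : 0 ≤ L) :
    ∃ s : ℝ, 0 ≤ s ∧ s ≤ 1 ∧ s * L = min α L := by
  rcases eq_or_lt_of_le hL with h|h
  · exact ⟨0, le_rfl, zero_le_one, by simp [← h, min_eq_right hα]⟩
  · exact ⟨min α L / L, div_nonneg (le_min hα h.le) h.le,
      (div_le_one h).2 (min_le_right _ _), div_mul_cancel₀ _ h.ne'⟩

private lemma aux_max_sub (a b : ℝ) : max a b - b = max (a - b) 0 := by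
  rcases le_total a b with h|h <;>
    simp [max_eq_left, max_eq_right, h, sub_nonpos.2 h, sub_nonneg.2 h]

private lemma aux_max_min (c u v : ℝ) : max (c - u) (c - v) = c - min u v := by
  rcases le_total u v with h|h <;>
    simp [min_eq_left, min_eq_right, h, max_eq_left, max_eq_right, sub_le_sub_iff_left] <;>
    linarith

private lemma aux_min_max (a A : ℝ) : min a A + max (a - A) 0 = a := by
  rcases le_total a A with h|h <;>
    simp [min_eq_left, min_eq_right, h, sub_nonpos.2 h, max_eq_left, sub_nonneg.2 h]

private lemma aux_key (a b A B : ℝ) :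
    min a A + min b B + min (max (a-A) 0) (max (b-B) 0) = min (min (a+B) (A+b)) (a+b) := by
  rcases le_total a A with h|h <;> rcases le_total b B with h'|h' <;>
    simp [min_def, max_def] <;> split_ifs <;> linarith

private lemma part_EU {Ω : Type*} {m0 : MeasurableSpace Ω} (P : Measure Ω) [IsProbabilityMeasure P]
    (m1 : MeasurableSpace Ω)
    (S₁ : Ω → ℝ) (hS₁meas : StronglyMeasurable[m1] S₁)
    (hS₁ : Integrable S₁ P)
    (α₁ α₂ : ℝ) (hα₁ : 0 ≤ α₁) (hα₂ : 0 ≤ α₂) (T : Ω → ℝ) (hTm : StronglyMeasurable[m1] T) (hTi : Integrable T P)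
    (S₂ : Ω → ℝ) (hTS : ∫ ω, T ω ∂P = ∫ ω, S₂ ω ∂P) :
    (sInf {x : ℝ | ∃ M : Ω → ℝ, StronglyMeasurable[m1] M ∧ Integrable M P ∧
        (∫ ω, max (S₁ ω - M ω) 0 ∂P) ≤ α₁ ∧
        (∫ ω, max (T ω - M ω) 0 ∂P) ≤ α₂ ∧
        x = ∫ ω, M ω ∂P}
      = max (max ((∫ ω, S₁ ω ∂P) - α₁) ((∫ ω, S₂ ω ∂P) - α₂))
          ((∫ ω, max (S₁ ω) (T ω) ∂P) - α₁ - α₂)) := by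
  -- fx = (S₁ - T)⁺, fy = (T - S₁)⁺
  have hxi : Integrable (fun ω => max (S₁ ω - T ω) 0) P := (hS₁.sub hTi).pos_part
  have hyi : Integrable (fun ω => max (T ω - S₁ ω) 0) P := (hTi.sub hS₁).pos_part
  have hxm : StronglyMeasurable[m1] (fun ω => max (S₁ ω - T ω) 0) :=
    (hS₁meas.sub hTm).sup stronglyMeasurable_const
  have hym : StronglyMeasurable[m1] (fun ω => max (T ω - S₁ ω) 0) :=
    (hTm.sub hS₁meas).sup stronglyMeasurable_const
  have hA0 : 0 ≤ ∫ ω, max (S₁ ω - T ω) 0 ∂P := integral_nonneg fun ω => le_max_right _ _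
  have hB0 : 0 ≤ ∫ ω, max (T ω - S₁ ω) 0 ∂P := integral_nonneg fun ω => le_max_right _ _
  obtain ⟨s, hs0, hs1, hsA⟩ := aux_exists_scale α₁ _ hα₁ hA0
  obtain ⟨t, ht0, ht1, htB⟩ := aux_exists_scale α₂ _ hα₂ hB0
  set e := min (max (α₁ - ∫ ω, max (S₁ ω - T ω) 0 ∂P) 0)
    (max (α₂ - ∫ ω, max (T ω - S₁ ω) 0 ∂P) 0) with hedef
  have he0 : 0 ≤ e := le_min (le_max_right _ _) (le_max_right _ _)
  have hSTi : Integrable (fun ω => max (S₁ ω) (T ω)) P := hS₁.sup hTi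
  have hSTm : StronglyMeasurable[m1] (fun ω => max (S₁ ω) (T ω)) := hS₁meas.sup hTm
  have hDi : Integrable (fun ω => s * max (S₁ ω - T ω) 0 + t * max (T ω - S₁ ω) 0 + e) P :=
    ((hxi.const_mul s).add (hyi.const_mul t)).add (integrable_const e)
  have hDm : StronglyMeasurable[m1]
      (fun ω => s * max (S₁ ω - T ω) 0 + t * max (T ω - S₁ ω) 0 + e) :=
    ((hxm.const_mul s).add (hym.const_mul t)).add stronglyMeasurable_const
  set M : Ω → ℝ := fun ω => max (S₁ ω) (T ω) -
    (s * max (S₁ ω - T ω) 0 + t * max (T ω - S₁ ω) 0 + e) with hMdef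
  have hMm : StronglyMeasurable[m1] M := hSTm.sub hDm
  have hMi : Integrable M P := hSTi.sub hDi
  have hyeq : ∀ ω, max (S₁ ω) (T ω) - S₁ ω = max (T ω - S₁ ω) 0 := fun ω => by
    rw [max_comm]; exact aux_max_sub _ _
  have hxeq : ∀ ω, max (S₁ ω) (T ω) - T ω = max (S₁ ω - T ω) 0 := fun ω => aux_max_sub _ _
  -- constraint 1
  have hc1 : (∫ ω, max (S₁ ω - M ω) 0 ∂P) ≤ α₁ := by
    have hc1p : ∀ ω, max (S₁ ω - M ω) 0 ≤ s * max (S₁ ω - T ω) 0 + e := fun ω => by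
      have h1 := hyeq ω
      have h2 : 0 ≤ max (S₁ ω - T ω) 0 := le_max_right _ _
      have h3 : 0 ≤ max (T ω - S₁ ω) 0 := le_max_right _ _
      have h4 : t * max (T ω - S₁ ω) 0 ≤ max (T ω - S₁ ω) 0 := by nlinarith
      have h5 : 0 ≤ s * max (S₁ ω - T ω) 0 := mul_nonneg hs0 h2
      exact max_le (by simp only [hMdef]; linarith) (by linarith)
    have hposSM : Integrable (fun ω => max (S₁ ω - M ω) 0) P := (hS₁.sub hMi).pos_part
    have hxe : Integrable (fun ω => s * max (S₁ ω - T ω) 0 + e) P :=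
      (hxi.const_mul s).add (integrable_const e)
    have h := integral_mono hposSM hxe hc1p
    rw [integral_add (hxi.const_mul s) (integrable_const e), integral_const_mul] at h
    simp only [integral_const, measure_univ, ENNReal.toReal_one, smul_eq_mul, one_mul, probReal_univ] at h
    have h7 : e ≤ max (α₁ - ∫ ω, max (S₁ ω - T ω) 0 ∂P) 0 := min_le_left _ _
    have h8 := aux_min_max α₁ (∫ ω, max (S₁ ω - T ω) 0 ∂P)
    calc (∫ ω, max (S₁ ω - M ω) 0 ∂P) ≤ s * (∫ ω, max (S₁ ω - T ω) 0 ∂P) + e := h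
      _ ≤ α₁ := by rw [hsA]; linarith
  -- constraint 2
  have hc2 : (∫ ω, max (T ω - M ω) 0 ∂P) ≤ α₂ := by
    have hc2p : ∀ ω, max (T ω - M ω) 0 ≤ t * max (T ω - S₁ ω) 0 + e := fun ω => by
      have h1 := hxeq ω
      have h2 : 0 ≤ max (S₁ ω - T ω) 0 := le_max_right _ _
      have h3 : 0 ≤ max (T ω - S₁ ω) 0 := le_max_right _ _
      have h4 : s * max (S₁ ω - T ω) 0 ≤ max (S₁ ω - T ω) 0 := by nlinarith
      have h5 : 0 ≤ t * max (T ω - S₁ ω) 0 := mul_nonneg ht0 h3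
      exact max_le (by simp only [hMdef]; linarith) (by linarith)
    have hposTM : Integrable (fun ω => max (T ω - M ω) 0) P := (hTi.sub hMi).pos_part
    have hye : Integrable (fun ω => t * max (T ω - S₁ ω) 0 + e) P :=
      (hyi.const_mul t).add (integrable_const e)
    have h := integral_mono hposTM hye hc2p
    rw [integral_add (hyi.const_mul t) (integrable_const e), integral_const_mul] at h
    simp only [integral_const, measure_univ, ENNReal.toReal_one, smul_eq_mul, one_mul, probReal_univ] at h
    have h7 : e ≤ max (α₂ - ∫ ω, max (T ω - S₁ ω) 0 ∂P) 0 := min_le_right _ _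
    have h8 := aux_min_max α₂ (∫ ω, max (T ω - S₁ ω) 0 ∂P)
    calc (∫ ω, max (T ω - M ω) 0 ∂P) ≤ t * (∫ ω, max (T ω - S₁ ω) 0 ∂P) + e := h
      _ ≤ α₂ := by rw [htB]; linarith
  -- value of E[M]
  have hEM : ∫ ω, M ω ∂P = (∫ ω, max (S₁ ω) (T ω) ∂P) -
      (min α₁ (∫ ω, max (S₁ ω - T ω) 0 ∂P) + min α₂ (∫ ω, max (T ω - S₁ ω) 0 ∂P) + e) := by
    simp only [hMdef]
    have hxy : Integrable (fun ω => s * max (S₁ ω - T ω) 0 + t * max (T ω - S₁ ω) 0) P :=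
      (hxi.const_mul s).add (hyi.const_mul t)
    have hxs : Integrable (fun ω => s * max (S₁ ω - T ω) 0) P := hxi.const_mul s
    have hyt : Integrable (fun ω => t * max (T ω - S₁ ω) 0) P := hyi.const_mul t
    rw [integral_sub hSTi hDi, integral_add hxy (integrable_const e),
      integral_add hxs hyt, integral_const_mul, integral_const_mul, hsA, htB]
    simp
  -- integral identities
  have hES1 : ∫ ω, S₁ ω ∂P = (∫ ω, max (S₁ ω) (T ω) ∂P) - ∫ ω, max (T ω - S₁ ω) 0 ∂P := by
    have h0 : (∫ ω, max (S₁ ω) (T ω) ∂P) = ∫ ω, (S₁ ω + max (T ω - S₁ ω) 0) ∂P :=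
      integral_congr_ae (Eventually.of_forall fun ω => by
        show max (S₁ ω) (T ω) = S₁ ω + max (T ω - S₁ ω) 0
        have := hyeq ω; linarith)
    rw [h0, integral_add hS₁ hyi]; ring
  have hES2 : ∫ ω, S₂ ω ∂P = (∫ ω, max (S₁ ω) (T ω) ∂P) - ∫ ω, max (S₁ ω - T ω) 0 ∂P := by
    have h0 : (∫ ω, max (S₁ ω) (T ω) ∂P) = ∫ ω, (T ω + max (S₁ ω - T ω) 0) ∂P :=
      integral_congr_ae (Eventually.of_forall fun ω => by
        show max (S₁ ω) (T ω) = T ω + max (S₁ ω - T ω) 0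
        have := hxeq ω; linarith)
    rw [h0, integral_add hTi hxi, hTS]; ring
  -- RHS = E[M]
  have hR : max (max ((∫ ω, S₁ ω ∂P) - α₁) ((∫ ω, S₂ ω ∂P) - α₂))
      ((∫ ω, max (S₁ ω) (T ω) ∂P) - α₁ - α₂) = ∫ ω, M ω ∂P := by
    rw [hEM, hES1, hES2]
    have h1 : (∫ ω, max (S₁ ω) (T ω) ∂P) - (∫ ω, max (T ω - S₁ ω) 0 ∂P) - α₁
        = (∫ ω, max (S₁ ω) (T ω) ∂P) - (α₁ + ∫ ω, max (T ω - S₁ ω) 0 ∂P) := by ring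
    have h2 : (∫ ω, max (S₁ ω) (T ω) ∂P) - (∫ ω, max (S₁ ω - T ω) 0 ∂P) - α₂
        = (∫ ω, max (S₁ ω) (T ω) ∂P) - ((∫ ω, max (S₁ ω - T ω) 0 ∂P) + α₂) := by ring
    have h3 : (∫ ω, max (S₁ ω) (T ω) ∂P) - α₁ - α₂
        = (∫ ω, max (S₁ ω) (T ω) ∂P) - (α₁ + α₂) := by ring
    rw [h1, h2, h3, aux_max_min, aux_max_min]
    rw [hedef, aux_key α₁ α₂ (∫ ω, max (S₁ ω - T ω) 0 ∂P) (∫ ω, max (T ω - S₁ ω) 0 ∂P)]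
  have hmem : (∫ ω, M ω ∂P) ∈ {x : ℝ | ∃ M : Ω → ℝ, StronglyMeasurable[m1] M ∧ Integrable M P ∧
        (∫ ω, max (S₁ ω - M ω) 0 ∂P) ≤ α₁ ∧
        (∫ ω, max (T ω - M ω) 0 ∂P) ≤ α₂ ∧
        x = ∫ ω, M ω ∂P} := ⟨M, hMm, hMi, hc1, hc2, rfl⟩
  have hlb : ∀ v ∈ {x : ℝ | ∃ M : Ω → ℝ, StronglyMeasurable[m1] M ∧ Integrable M P ∧
        (∫ ω, max (S₁ ω - M ω) 0 ∂P) ≤ α₁ ∧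
        (∫ ω, max (T ω - M ω) 0 ∂P) ≤ α₂ ∧
        x = ∫ ω, M ω ∂P},
      max (max ((∫ ω, S₁ ω ∂P) - α₁) ((∫ ω, S₂ ω ∂P) - α₂))
        ((∫ ω, max (S₁ ω) (T ω) ∂P) - α₁ - α₂) ≤ v := by
    rintro v ⟨N, hNm, hNi, h1, h2, rfl⟩
    have hSN : Integrable (fun ω => S₁ ω - N ω) P := hS₁.sub hNi
    have hTN : Integrable (fun ω => T ω - N ω) P := hTi.sub hNi
    have hposSN : Integrable (fun ω => max (S₁ ω - N ω) 0) P := hSN.pos_part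
    have hposTN : Integrable (fun ω => max (T ω - N ω) 0) P := hTN.pos_part
    have e1 : (∫ ω, S₁ ω ∂P) - α₁ ≤ ∫ ω, N ω ∂P := by
      have h3 := integral_mono hSN hposSN (fun ω => le_max_left _ _)
      rw [integral_sub hS₁ hNi] at h3
      linarith
    have e2 : (∫ ω, S₂ ω ∂P) - α₂ ≤ ∫ ω, N ω ∂P := by
      have h3 := integral_mono hTN hposTN (fun ω => le_max_left _ _)
      rw [integral_sub hTi hNi, hTS] at h3
      linarith
    have e3 : (∫ ω, max (S₁ ω) (T ω) ∂P) - α₁ - α₂ ≤ ∫ ω, N ω ∂P := by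
      have hSTN : Integrable (fun ω => max (S₁ ω) (T ω) - N ω) P := hSTi.sub hNi
      have hsum : Integrable (fun ω => max (S₁ ω - N ω) 0 + max (T ω - N ω) 0) P :=
        hposSN.add hposTN
      have hp : ∀ ω, max (S₁ ω) (T ω) - N ω ≤ max (S₁ ω - N ω) 0 + max (T ω - N ω) 0 :=
        fun ω => by
          have h3 := le_max_left (S₁ ω - N ω) 0
          have h4 := le_max_left (T ω - N ω) 0
          have h5 := le_max_right (S₁ ω - N ω) 0
          have h6 := le_max_right (T ω - N ω) 0
          rcases le_total (S₁ ω) (T ω) with h|h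
          · rw [max_eq_right h]; linarith
          · rw [max_eq_left h]; linarith
      have h3 := integral_mono hSTN hsum hp
      rw [integral_sub hSTi hNi, integral_add hposSN hposTN] at h3
      linarith
    exact max_le (max_le e1 e2) e3
  exact le_antisymm (hR ▸ csInf_le ⟨_, hlb⟩ hmem) (le_csInf ⟨_, hmem⟩ hlb)

private lemma part_TC {Ω : Type*} {m0 : MeasurableSpace Ω} (P : Measure Ω) [IsProbabilityMeasure P]
    (m1 : MeasurableSpace Ω)
    (S₁ : Ω → ℝ) (hS₁meas : StronglyMeasurable[m1] S₁)
    (hS₁ : Integrable S₁ P)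
    (α₁ α₂ : ℝ) (hα₁ : 0 ≤ α₁) (hα₂ : 0 ≤ α₂) (T : Ω → ℝ) (hTm : StronglyMeasurable[m1] T) (hTi : Integrable T P)
    (S₂ : Ω → ℝ) (hTS : ∫ ω, T ω ∂P = ∫ ω, S₂ ω ∂P) :
    (sInf {x : ℝ | ∃ M : Ω → ℝ, StronglyMeasurable[m1] M ∧ Integrable M P ∧
        (∫ ω, max (S₁ ω - M ω) 0 ∂P) ≤ α₁ ∧
        (∀ᵐ ω ∂P, max (T ω - M ω) 0 ≤ α₂) ∧
        x = ∫ ω, M ω ∂P}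
      = max ((∫ ω, S₂ ω ∂P) - α₂)
          ((∫ ω, max (S₁ ω) (T ω - α₂) ∂P) - α₁)) := by
  have hzi : Integrable (fun ω => max (S₁ ω - (T ω - α₂)) 0) P :=
    (hS₁.sub (hTi.sub (integrable_const α₂))).pos_part
  have hzm : StronglyMeasurable[m1] (fun ω => max (S₁ ω - (T ω - α₂)) 0) :=
    (hS₁meas.sub (hTm.sub stronglyMeasurable_const)).sup stronglyMeasurable_const
  have hL0 : 0 ≤ ∫ ω, max (S₁ ω - (T ω - α₂)) 0 ∂P :=
    integral_nonneg fun ω => le_max_right _ _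
  obtain ⟨s, hs0, hs1, hsL⟩ := aux_exists_scale α₁ _ hα₁ hL0
  have hZi : Integrable (fun ω => max (S₁ ω) (T ω - α₂)) P :=
    hS₁.sup (hTi.sub (integrable_const α₂))
  have hZm : StronglyMeasurable[m1] (fun ω => max (S₁ ω) (T ω - α₂)) :=
    hS₁meas.sup (hTm.sub stronglyMeasurable_const)
  have hzeq : ∀ ω, max (S₁ ω) (T ω - α₂) - (T ω - α₂) = max (S₁ ω - (T ω - α₂)) 0 :=
    fun ω => aux_max_sub _ _
  -- the candidate M
  set M : Ω → ℝ := fun ω => max (S₁ ω) (T ω - α₂) - s * max (S₁ ω - (T ω - α₂)) 0 with hMdef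
  have hMm : StronglyMeasurable[m1] M := hZm.sub (hzm.const_mul s)
  have hMi : Integrable M P := hZi.sub (hzi.const_mul s)
  have hc1 : (∫ ω, max (S₁ ω - M ω) 0 ∂P) ≤ α₁ := by
    have hc1p : ∀ ω, max (S₁ ω - M ω) 0 ≤ s * max (S₁ ω - (T ω - α₂)) 0 := fun ω => by
      have h1 : S₁ ω ≤ max (S₁ ω) (T ω - α₂) := le_max_left _ _
      have h5 : 0 ≤ s * max (S₁ ω - (T ω - α₂)) 0 := mul_nonneg hs0 (le_max_right _ _)
      exact max_le (by simp only [hMdef]; linarith) h5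
    have hposSM : Integrable (fun ω => max (S₁ ω - M ω) 0) P := (hS₁.sub hMi).pos_part
    have hzs : Integrable (fun ω => s * max (S₁ ω - (T ω - α₂)) 0) P := hzi.const_mul s
    have h := integral_mono hposSM hzs hc1p
    rw [integral_const_mul] at h
    calc (∫ ω, max (S₁ ω - M ω) 0 ∂P) ≤ s * ∫ ω, max (S₁ ω - (T ω - α₂)) 0 ∂P := h
      _ = min α₁ _ := hsL
      _ ≤ α₁ := min_le_left _ _
  have hc2 : ∀ᵐ ω ∂P, max (T ω - M ω) 0 ≤ α₂ := Eventually.of_forall fun ω => by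
    have h2 := hzeq ω
    have h4 : 0 ≤ (1 - s) * max (S₁ ω - (T ω - α₂)) 0 :=
      mul_nonneg (by linarith) (le_max_right _ _)
    refine max_le ?_ hα₂
    simp only [hMdef]
    nlinarith [h2, h4]
  have hEM : ∫ ω, M ω ∂P = (∫ ω, max (S₁ ω) (T ω - α₂) ∂P) -
      min α₁ (∫ ω, max (S₁ ω - (T ω - α₂)) 0 ∂P) := by
    have hzs : Integrable (fun ω => s * max (S₁ ω - (T ω - α₂)) 0) P := hzi.const_mul s
    simp only [hMdef]
    rw [integral_sub hZi hzs, integral_const_mul, hsL]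
  have hZL : (∫ ω, max (S₁ ω) (T ω - α₂) ∂P)
      = (∫ ω, S₂ ω ∂P) - α₂ + ∫ ω, max (S₁ ω - (T ω - α₂)) 0 ∂P := by
    have h0 : (∫ ω, max (S₁ ω) (T ω - α₂) ∂P)
        = ∫ ω, ((T ω - α₂) + max (S₁ ω - (T ω - α₂)) 0) ∂P :=
      integral_congr_ae (Eventually.of_forall fun ω => by
        show S₁ ω ⊔ (T ω - α₂) = T ω - α₂ + max (S₁ ω - (T ω - α₂)) 0
        have := hzeq ω; linarith)
    have hTα : Integrable (fun ω => T ω - α₂) P := hTi.sub (integrable_const α₂)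
    rw [h0, integral_add hTα hzi, integral_sub hTi (integrable_const α₂), hTS]
    simp
  have hR : max ((∫ ω, S₂ ω ∂P) - α₂) ((∫ ω, max (S₁ ω) (T ω - α₂) ∂P) - α₁)
      = ∫ ω, M ω ∂P := by
    rw [hEM]
    have h1 : (∫ ω, S₂ ω ∂P) - α₂ = (∫ ω, max (S₁ ω) (T ω - α₂) ∂P) -
        ∫ ω, max (S₁ ω - (T ω - α₂)) 0 ∂P := by rw [hZL]; ring
    rw [h1, aux_max_min, min_comm]
  have hmem : (∫ ω, M ω ∂P) ∈ {x : ℝ | ∃ M : Ω → ℝ, StronglyMeasurable[m1] M ∧ Integrable M P ∧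
        (∫ ω, max (S₁ ω - M ω) 0 ∂P) ≤ α₁ ∧
        (∀ᵐ ω ∂P, max (T ω - M ω) 0 ≤ α₂) ∧
        x = ∫ ω, M ω ∂P} := ⟨M, hMm, hMi, hc1, hc2, rfl⟩
  have hlb : ∀ v ∈ {x : ℝ | ∃ M : Ω → ℝ, StronglyMeasurable[m1] M ∧ Integrable M P ∧
        (∫ ω, max (S₁ ω - M ω) 0 ∂P) ≤ α₁ ∧
        (∀ᵐ ω ∂P, max (T ω - M ω) 0 ≤ α₂) ∧
        x = ∫ ω, M ω ∂P},
      max ((∫ ω, S₂ ω ∂P) - α₂) ((∫ ω, max (S₁ ω) (T ω - α₂) ∂P) - α₁) ≤ v := by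
    rintro v ⟨N, hNm, hNi, h1, h2, rfl⟩
    have hNT : ∀ᵐ ω ∂P, T ω - α₂ ≤ N ω := h2.mono fun ω h => by
      have := le_max_left (T ω - N ω) 0; linarith
    have e1 : (∫ ω, S₂ ω ∂P) - α₂ ≤ ∫ ω, N ω ∂P := by
      have hTα : Integrable (fun ω => T ω - α₂) P := hTi.sub (integrable_const α₂)
      have h3 := integral_mono_ae hTα hNi hNT
      rw [integral_sub hTi (integrable_const α₂), hTS] at h3
      simpa using h3
    have e2 : (∫ ω, max (S₁ ω) (T ω - α₂) ∂P) - α₁ ≤ ∫ ω, N ω ∂P := by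
      have hp : ∀ᵐ ω ∂P, max (S₁ ω) (T ω - α₂) - N ω ≤ max (S₁ ω - N ω) 0 :=
        hNT.mono fun ω h => by
          rcases le_total (S₁ ω) (T ω - α₂) with hh|hh
          · rw [max_eq_right hh]; have := le_max_right (S₁ ω - N ω) 0; linarith
          · rw [max_eq_left hh]; have := le_max_left (S₁ ω - N ω) 0; linarith
      have hZN : Integrable (fun ω => max (S₁ ω) (T ω - α₂) - N ω) P := hZi.sub hNi
      have hposSN : Integrable (fun ω => max (S₁ ω - N ω) 0) P := (hS₁.sub hNi).pos_part
      have h4 := integral_mono_ae hZN hposSN hp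
      rw [integral_sub hZi hNi] at h4
      linarith
    exact max_le e1 e2
  exact le_antisymm (hR ▸ csInf_le ⟨_, hlb⟩ hmem) (le_csInf ⟨_, hmem⟩ hlb)

private lemma part_LB {Ω : Type*} {m0 : MeasurableSpace Ω} (P : Measure Ω) [IsProbabilityMeasure P]
    (m1 : MeasurableSpace Ω)
    (S₁ : Ω → ℝ) (hS₁meas : StronglyMeasurable[m1] S₁)
    (hS₁ : Integrable S₁ P)
    (α₁ α₂ : ℝ) (hα₁ : 0 ≤ α₁) (hα₂ : 0 ≤ α₂) (T : Ω → ℝ) (hTm : StronglyMeasurable[m1] T) (hTi : Integrable T P) :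
    (sInf {x : ℝ | ∃ M : Ω → ℝ, StronglyMeasurable[m1] M ∧ Integrable M P ∧
        (∫ ω, max (max (S₁ ω - M ω) 0 - α₁) (max (T ω - M ω) 0 - α₂) ∂P) ≤ 0 ∧
        x = ∫ ω, M ω ∂P}
      = ∫ ω, max (S₁ ω - α₁) (T ω - α₂) ∂P) := by
  have hMm : StronglyMeasurable[m1] (fun ω => max (S₁ ω - α₁) (T ω - α₂)) :=
    (hS₁meas.sub stronglyMeasurable_const).sup (hTm.sub stronglyMeasurable_const)
  have hMi : Integrable (fun ω => max (S₁ ω - α₁) (T ω - α₂)) P :=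
    (hS₁.sub (integrable_const α₁)).sup (hTi.sub (integrable_const α₂))
  have hc : (∫ ω, max (max (S₁ ω - max (S₁ ω - α₁) (T ω - α₂)) 0 - α₁)
      (max (T ω - max (S₁ ω - α₁) (T ω - α₂)) 0 - α₂) ∂P) ≤ 0 := by
    refine integral_nonpos fun ω => ?_
    simp only [Pi.zero_apply]
    have h1 : S₁ ω - max (S₁ ω - α₁) (T ω - α₂) ≤ α₁ := by
      have := le_max_left (S₁ ω - α₁) (T ω - α₂); linarith
    have h2 : T ω - max (S₁ ω - α₁) (T ω - α₂) ≤ α₂ := by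
      have := le_max_right (S₁ ω - α₁) (T ω - α₂); linarith
    exact max_le (by have := max_le h1 hα₁; linarith) (by have := max_le h2 hα₂; linarith)
  have hmem : (∫ ω, max (S₁ ω - α₁) (T ω - α₂) ∂P) ∈
      {x : ℝ | ∃ M : Ω → ℝ, StronglyMeasurable[m1] M ∧ Integrable M P ∧
        (∫ ω, max (max (S₁ ω - M ω) 0 - α₁) (max (T ω - M ω) 0 - α₂) ∂P) ≤ 0 ∧
        x = ∫ ω, M ω ∂P} :=
    ⟨_, hMm, hMi, hc, rfl⟩
  have hlb : ∀ v ∈ {x : ℝ | ∃ M : Ω → ℝ, StronglyMeasurable[m1] M ∧ Integrable M P ∧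
        (∫ ω, max (max (S₁ ω - M ω) 0 - α₁) (max ((T) ω - M ω) 0 - α₂) ∂P) ≤ 0 ∧
        x = ∫ ω, M ω ∂P}, (∫ ω, max (S₁ ω - α₁) (T ω - α₂) ∂P) ≤ v := by
    rintro v ⟨N, hNm, hNi, h1, rfl⟩
    have hgi : Integrable (fun ω => max (max (S₁ ω - N ω) 0 - α₁) (max (T ω - N ω) 0 - α₂)) P :=
      ((hS₁.sub hNi).pos_part.sub (integrable_const α₁)).sup
        ((hTi.sub hNi).pos_part.sub (integrable_const α₂))
    have hp : ∀ ω, max (S₁ ω - α₁) (T ω - α₂) - N ω ≤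
        max (max (S₁ ω - N ω) 0 - α₁) (max (T ω - N ω) 0 - α₂) := fun ω => by
      have h3 := le_max_left (S₁ ω - N ω) 0
      have h4 := le_max_left (T ω - N ω) 0
      rcases le_total (S₁ ω - α₁) (T ω - α₂) with h|h
      · rw [max_eq_right h]
        have := le_max_right (max (S₁ ω - N ω) 0 - α₁) (max (T ω - N ω) 0 - α₂); linarith
      · rw [max_eq_left h]
        have := le_max_left (max (S₁ ω - N ω) 0 - α₁) (max (T ω - N ω) 0 - α₂); linarith
    have h5 := integral_mono (hMi.sub hNi) hgi hp
    simp only [Pi.sub_apply] at h5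
    rw [integral_sub hMi hNi] at h5
    linarith
  exact le_antisymm (csInf_le ⟨_, hlb⟩ hmem) (le_csInf ⟨_, hmem⟩ hlb)

/-- The two-date risk-neutral example with loss `l(x) = (-x)⁺`: explicit values of
`V₀^EU`, `V₀^TC` and `V₀^LB`, with `T = E[S₂ | F₁]`. -/
theorem stmt_13
    {Ω : Type*} {m0 : MeasurableSpace Ω} (P : Measure Ω) [IsProbabilityMeasure P]
    (m1 : MeasurableSpace Ω) (hm1 : m1 ≤ m0)
    (S₁ S₂ : Ω → ℝ) (hS₁meas : StronglyMeasurable[m1] S₁)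
    (hS₁ : Integrable S₁ P) (hS₂ : Integrable S₂ P)
    (α₁ α₂ : ℝ) (hα₁ : 0 ≤ α₁) (hα₂ : 0 ≤ α₂) :
    (sInf {x : ℝ | ∃ M : Ω → ℝ, StronglyMeasurable[m1] M ∧ Integrable M P ∧
        (∫ ω, max (S₁ ω - M ω) 0 ∂P) ≤ α₁ ∧
        (∫ ω, max ((P[S₂|m1]) ω - M ω) 0 ∂P) ≤ α₂ ∧
        x = ∫ ω, M ω ∂P}
      = max (max ((∫ ω, S₁ ω ∂P) - α₁) ((∫ ω, S₂ ω ∂P) - α₂))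
          ((∫ ω, max (S₁ ω) ((P[S₂|m1]) ω) ∂P) - α₁ - α₂))
    ∧
    (sInf {x : ℝ | ∃ M : Ω → ℝ, StronglyMeasurable[m1] M ∧ Integrable M P ∧
        (∫ ω, max (S₁ ω - M ω) 0 ∂P) ≤ α₁ ∧
        (∀ᵐ ω ∂P, max ((P[S₂|m1]) ω - M ω) 0 ≤ α₂) ∧
        x = ∫ ω, M ω ∂P}
      = max ((∫ ω, S₂ ω ∂P) - α₂)
          ((∫ ω, max (S₁ ω) ((P[S₂|m1]) ω - α₂) ∂P) - α₁))
    ∧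
    (sInf {x : ℝ | ∃ M : Ω → ℝ, StronglyMeasurable[m1] M ∧ Integrable M P ∧
        (∫ ω, max (max (S₁ ω - M ω) 0 - α₁) (max ((P[S₂|m1]) ω - M ω) 0 - α₂) ∂P) ≤ 0 ∧
        x = ∫ ω, M ω ∂P}
      = ∫ ω, max (S₁ ω - α₁) ((P[S₂|m1]) ω - α₂) ∂P) := by
  
  exact ⟨part_EU P m1 S₁ hS₁meas hS₁ α₁ α₂ hα₁ hα₂ _ stronglyMeasurable_condExp
      integrable_condExp S₂ (integral_condExp hm1),
    part_TC P m1 S₁ hS₁meas hS₁ α₁ α₂ hα₁ hα₂ _ stronglyMeasurable_condExp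
      integrable_condExp S₂ (integral_condExp hm1),
    part_LB P m1 S₁ hS₁meas hS₁ α₁ α₂ hα₁ hα₂ _ stronglyMeasurable_condExp
      integrable_condExp⟩
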